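/- Assume the highest root θ is fundamental and let α_θ be the unique simple root with (θ, α_θ) ≠ 0. Then α_θ is a long root, [θ:α_θ] = 2, and the sum Σ_β [θ:β], taken over the simple roots β adjacent to α_θ, equals 3. -/

import Mathlib

open scoped InnerProductSpace

/-- An irreducible reduced crystallographic root system, spanning a finite-dimensional
real inner product space, together with a fixed base (set of simple roots) and the
coefficient function expressing each root in the base. -/
structure RootSystemData (V : Type) [NormedAddCommGroup V] [InnerProductSpace ℝ V]
    [FiniteDimensional ℝ V] where
  roots : Set V
  finite : roots.Finite
  nonzero : ∀ γ ∈ roots, γ ≠ 0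
  spans : Submodule.span ℝ roots = ⊤
  reflClosed : ∀ α ∈ roots, ∀ β ∈ roots, β - (2 * ⟪β, α⟫_ℝ / ⟪α, α⟫_ℝ) • α ∈ roots
  crystal : ∀ α ∈ roots, ∀ β ∈ roots, ∃ k : ℤ, 2 * ⟪β, α⟫_ℝ / ⟪α, α⟫_ℝ = (k : ℝ)
  reduced : ∀ α ∈ roots, ∀ t : ℝ, t • α ∈ roots → t = 1 ∨ t = -1
  irred : ∀ A B : Set V, roots = A ∪ B → (∀ a ∈ A, ∀ b ∈ B, ⟪a, b⟫_ℝ = 0) →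
    A = ∅ ∨ B = ∅
  simples : Finset V
  simples_sub : ↑simples ⊆ roots
  simples_indep : LinearIndependent ℝ (Subtype.val : {x : V // x ∈ simples} → V)
  coeff : V → V → ℤ
  coeff_spec : ∀ γ ∈ roots, γ = ∑ α ∈ simples, coeff γ α • α
  coeff_sign : ∀ γ ∈ roots, (∀ α ∈ simples, 0 ≤ coeff γ α) ∨ (∀ α ∈ simples, coeff γ α ≤ 0)

namespace RootSystemData

variable {V : Type} [NormedAddCommGroup V] [InnerProductSpace ℝ V] [FiniteDimensional ℝ V]
variable (R : RootSystemData V)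

/-- The set of positive roots `Δ⁺` (w.r.t. the base `simples`). -/
def posRoots : Set V := {γ | γ ∈ R.roots ∧ ∀ α ∈ R.simples, 0 ≤ R.coeff γ α}

/-- The partial order `μ ≼ ν`: `ν - μ` is a nonnegative integral combination of simple roots. -/
def rle (μ ν : V) : Prop := ∃ c : V → ℕ, ν - μ = ∑ α ∈ R.simples, (c α : ℤ) • α

/-- `θ` is the highest root. -/
def IsHighest (θ : V) : Prop := θ ∈ R.posRoots ∧ ∀ γ ∈ R.roots, R.rle γ θ

/-- `γ` is a long root: a root of maximal length. -/
def IsLong (γ : V) : Prop := γ ∈ R.roots ∧ ∀ γ' ∈ R.roots, ‖γ'‖ ≤ ‖γ‖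

/-- `I` is an upper ideal of `(Δ⁺, ≼)`. -/
def IsUpperIdeal (I : Set V) : Prop :=
  I ⊆ R.posRoots ∧ ∀ ν ∈ I, ∀ γ ∈ R.posRoots, R.rle ν γ → γ ∈ I

/-- `I` is an abelian upper ideal of `(Δ⁺, ≼)`. -/
def IsAbelianIdeal (I : Set V) : Prop :=
  R.IsUpperIdeal I ∧ ∀ γ₁ ∈ I, ∀ γ₂ ∈ I, γ₁ + γ₂ ∉ R.roots

/-- The set of minimal elements of `M ⊆ Δ⁺` w.r.t. `≼`. -/
def minSet (M : Set V) : Set V := {γ | γ ∈ M ∧ ∀ ν ∈ M, R.rle ν γ → ν = γ}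

/-- The set of maximal elements of `M ⊆ Δ⁺` w.r.t. `≼`. -/
def maxSet (M : Set V) : Set V := {γ | γ ∈ M ∧ ∀ ν ∈ M, R.rle γ ν → ν = γ}

/-- `S(I) = {α ∈ Π : ∃ γ ∈ min(I), γ - α ∈ Δ⁺ ∪ {0}}`; the complement `Π ∖ S(I)` is the
set of simple roots of the standard Levi subalgebra of the normaliser of the ideal `I`. -/
def normS (I : Set V) : Set V :=
  {α | α ∈ R.simples ∧ ∃ γ ∈ R.minSet I, (γ - α ∈ R.posRoots ∨ γ = α)}

/-- `H = {γ ∈ Δ⁺ : (γ, θ) ≠ 0}`. -/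
def Hset (θ : V) : Set V := {γ | γ ∈ R.posRoots ∧ ⟪γ, θ⟫_ℝ ≠ 0}

/-- `deg_S(γ) = Σ_{α ∈ S} [γ:α]`. -/
def degS (S : Finset V) (γ : V) : ℤ := ∑ α ∈ S, R.coeff γ α

/-- `I_S = {γ ∈ Δ⁺ : deg_S(γ) ≥ ⌊d(S)/2⌋ + 1}`, where `d(S) = deg_S(θ)`: the abelian ideal
`g(≥ ⌊hot(p)/2⌋ + 1)` associated with the standard parabolic subalgebra `p(S)`. -/
def idealS (S : Finset V) (θ : V) : Set V :=
  {γ | γ ∈ R.posRoots ∧ R.degS S θ / 2 + 1 ≤ R.degS S γ}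

/-- The highest root `θ` is fundamental with `α_θ` the unique simple root not
orthogonal to `θ`, and `(θ, α_θ∨) = 1`. -/
def IsFundamental (θ αθ : V) : Prop :=
  αθ ∈ R.simples ∧ ⟪θ, αθ⟫_ℝ ≠ 0 ∧ (∀ β ∈ R.simples, ⟪θ, β⟫_ℝ ≠ 0 → β = αθ) ∧
    2 * ⟪θ, αθ⟫_ℝ / ⟪αθ, αθ⟫_ℝ = 1

end RootSystemData

/-- The reflection `s_α`. -/
noncomputable def rsRefl {V : Type} [NormedAddCommGroup V] [InnerProductSpace ℝ V] (α x : V) : V :=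
  x - (2 * ⟪x, α⟫_ℝ / ⟪α, α⟫_ℝ) • α

/-- The element of the Weyl group given by the word `l = [α₁, …, α_m]`,
namely `s_{α₁} ∘ ⋯ ∘ s_{α_m}`; its inverse is `wordMap l.reverse`. -/
noncomputable def wordMap {V : Type} [NormedAddCommGroup V] [InnerProductSpace ℝ V] (l : List V) : V → V :=
  l.foldr (fun α f => rsRefl α ∘ f) id

namespace RootSystemData

variable {V : Type} [NormedAddCommGroup V] [InnerProductSpace ℝ V] [FiniteDimensional ℝ V]
variable (R : RootSystemData V)

lemma inner_self_pos' {γ : V} (h : γ ∈ R.roots) : 0 < ⟪γ, γ⟫_ℝ := by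
  rw [real_inner_self_eq_norm_mul_norm]
  have : 0 < ‖γ‖ := norm_pos_iff.mpr (R.nonzero γ h)
  positivity

lemma coeff_spec' {γ : V} (h : γ ∈ R.roots) :
    γ = ∑ α ∈ R.simples, ((R.coeff γ α : ℝ)) • α := by
  conv_lhs => rw [R.coeff_spec γ h]
  exact Finset.sum_congr rfl fun α _ => (Int.cast_smul_eq_zsmul ℝ _ _).symm

lemma coeff_unique {f g : V → ℝ}
    (h : ∑ α ∈ R.simples, f α • α = ∑ α ∈ R.simples, g α • α) :
    ∀ α ∈ R.simples, f α = g α := by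
  have hli := Fintype.linearIndependent_iff.mp R.simples_indep
    (fun i : {x : V // x ∈ R.simples} => f i.1 - g i.1)
  have hsum : ∑ i : {x : V // x ∈ R.simples}, (f i.1 - g i.1) • (i.1 : V) = 0 := by
    rw [Finset.sum_coe_sort R.simples (fun α => (f α - g α) • α)]
    simp only [sub_smul, Finset.sum_sub_distrib, h, sub_self]
  intro α hα
  have := hli hsum ⟨α, hα⟩
  simpa [sub_eq_zero] using this

lemma neg_mem {γ : V} (h : γ ∈ R.roots) : -γ ∈ R.roots := by
  have hne : ⟪γ, γ⟫_ℝ ≠ 0 := (R.inner_self_pos' h).ne'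
  have h2 : 2 * ⟪γ, γ⟫_ℝ / ⟪γ, γ⟫_ℝ = (2 : ℝ) := by
    rw [mul_div_assoc, div_self hne, mul_one]
  have hm := R.reflClosed γ h γ h
  rw [h2] at hm
  have e : γ - (2 : ℝ) • γ = -γ := by module
  rwa [e] at hm

lemma add_mem_of_inner_neg {δ ε : V} (hδ : δ ∈ R.roots) (hε : ε ∈ R.roots)
    (hneg : ⟪δ, ε⟫_ℝ < 0) (hne : δ + ε ≠ 0) : δ + ε ∈ R.roots := by
  obtain ⟨n, hn⟩ := R.crystal δ hδ ε hε
  obtain ⟨m, hm⟩ := R.crystal ε hε δ hδ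
  have hδδ := R.inner_self_pos' hδ
  have hεε := R.inner_self_pos' hε
  have hn' : 2 * ⟪ε, δ⟫_ℝ = n * ⟪δ, δ⟫_ℝ := (div_eq_iff hδδ.ne').mp hn
  have hm' : 2 * ⟪δ, ε⟫_ℝ = m * ⟪ε, ε⟫_ℝ := (div_eq_iff hεε.ne').mp hm
  have hcomm : ⟪ε, δ⟫_ℝ = ⟪δ, ε⟫_ℝ := real_inner_comm δ ε
  have hnneg : (n : ℝ) < 0 := by nlinarith
  have hmneg : (m : ℝ) < 0 := by nlinarith
  have hn1 : n ≤ -1 := by have : n < 0 := by exact_mod_cast hnneg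
                          omega
  have hm1 : m ≤ -1 := by have : m < 0 := by exact_mod_cast hmneg
                          omega
  have hcs := real_inner_mul_inner_self_le δ ε
  have h4 : ((n : ℝ) * ⟪δ, δ⟫_ℝ) * ((m : ℝ) * ⟪ε, ε⟫_ℝ) = 4 * (⟪δ, ε⟫_ℝ * ⟪δ, ε⟫_ℝ) := by
    rw [← hn', ← hm', hcomm]; ring
  have hprod : ((n * m : ℤ) : ℝ) ≤ 4 := by
    push_cast
    nlinarith [mul_pos hδδ hεε]
  have hprod' : n * m ≤ 4 := by exact_mod_cast hprod
  have hn4 : -4 ≤ n := by nlinarith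
  have key : n = -1 ∨ m = -1 ∨ (n = -2 ∧ m = -2) := by
    interval_cases n <;> omega
  rcases key with h | h | ⟨h1, h2⟩
  · have hmem := R.reflClosed δ hδ ε hε
    rw [hn, h] at hmem
    have e : ε - ((-1 : ℤ) : ℝ) • δ = δ + ε := by push_cast; module
    rwa [e] at hmem
  · have hmem := R.reflClosed ε hε δ hδ
    rw [hm, h] at hmem
    have e : δ - ((-1 : ℤ) : ℝ) • ε = δ + ε := by push_cast; module
    rwa [e] at hmem
  · exfalso
    apply hne
    have hz : ⟪δ + ε, δ + ε⟫_ℝ = 0 := by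
      rw [h1] at hn'; rw [h2] at hm'
      simp only [inner_add_left, inner_add_right]
      push_cast at hn' hm'
      linarith
    have : ‖δ + ε‖ * ‖δ + ε‖ = 0 := by
      rw [← real_inner_self_eq_norm_mul_norm, hz]
    simpa [mul_self_eq_zero] using this

lemma add_ne_zero_of_simples {α β : V} (hα : α ∈ R.simples) (hβ : β ∈ R.simples)
    (hne : α ≠ β) : α + β ≠ 0 := by
  classical
  intro h0
  have hsum : ∑ x ∈ R.simples,
      ((if x = α then (1 : ℝ) else 0) + (if x = β then (1 : ℝ) else 0)) • x
      = ∑ x ∈ R.simples, (0 : ℝ) • x := by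
    simp only [add_smul, ite_smul, one_smul, zero_smul, Finset.sum_add_distrib,
      Finset.sum_ite_eq', if_pos hα, if_pos hβ, Finset.sum_const_zero]
    rw [h0]
  have := R.coeff_unique hsum α hα
  simp [hne] at this

lemma simples_inner_nonpos {α β : V} (hα : α ∈ R.simples) (hβ : β ∈ R.simples)
    (hne : α ≠ β) : ⟪α, β⟫_ℝ ≤ 0 := by
  classical
  by_contra hpos
  push_neg at hpos
  have hαr := R.simples_sub hα
  have hβr := R.simples_sub hβ
  have hmem : α + -β ∈ R.roots := by
    apply R.add_mem_of_inner_neg hαr (R.neg_mem hβr)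
    · simpa [inner_neg_right] using hpos
    · intro h; apply hne; rw [← sub_eq_zero]; simpa [sub_eq_add_neg] using h
  have hγ : α - β ∈ R.roots := by rwa [← sub_eq_add_neg] at hmem
  have hsum : ∑ x ∈ R.simples, ((R.coeff (α - β) x : ℝ)) • x
      = ∑ x ∈ R.simples,
        ((if x = α then (1 : ℝ) else 0) - (if x = β then (1 : ℝ) else 0)) • x := by
    rw [← R.coeff_spec' hγ]
    simp only [sub_smul, ite_smul, one_smul, zero_smul, Finset.sum_sub_distrib,
      Finset.sum_ite_eq', if_pos hα, if_pos hβ]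
  have hu := R.coeff_unique hsum
  have h1 : (R.coeff (α - β) α : ℝ) = 1 := by simpa [hne] using hu α hα
  have h2 : (R.coeff (α - β) β : ℝ) = -1 := by simpa [Ne.symm hne] using hu β hβ
  have h1' : R.coeff (α - β) α = 1 := by exact_mod_cast h1
  have h2' : R.coeff (α - β) β = -1 := by exact_mod_cast h2
  rcases R.coeff_sign (α - β) hγ with h | h
  · have := h β hβ; omega
  · have := h α hα; omega

lemma refl_inner_self {α δ : V} (hα : ⟪α, α⟫_ℝ ≠ 0) :
    ⟪δ - (2 * ⟪δ, α⟫_ℝ / ⟪α, α⟫_ℝ) • α, δ - (2 * ⟪δ, α⟫_ℝ / ⟪α, α⟫_ℝ) • α⟫_ℝ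
      = ⟪δ, δ⟫_ℝ := by
  set k := 2 * ⟪δ, α⟫_ℝ / ⟪α, α⟫_ℝ with hk
  have hkα : k * ⟪α, α⟫_ℝ = 2 * ⟪δ, α⟫_ℝ := by
    rw [hk]; field_simp
  simp only [inner_sub_left, inner_sub_right, real_inner_smul_left, real_inner_smul_right,
    real_inner_comm α δ]
  have hc : ⟪δ, α⟫_ℝ = ⟪α, δ⟫_ℝ := real_inner_comm α δ
  linear_combination k * hkα + 2 * k * hc

lemma exists_dominant {γ : V} (hγ : γ ∈ R.roots) :
    ∃ δ ∈ R.roots, ⟪δ, δ⟫_ℝ = ⟪γ, γ⟫_ℝ ∧ ∀ α ∈ R.simples, 0 ≤ ⟪δ, α⟫_ℝ := by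
  classical
  set O : Set V := {x | x ∈ R.roots ∧ ⟪x, x⟫_ℝ = ⟪γ, γ⟫_ℝ} with hO
  have hfin : O.Finite := R.finite.subset fun x hx => hx.1
  have hne : O.Nonempty := ⟨γ, hγ, rfl⟩
  obtain ⟨δ, hδO, hmax⟩ := Set.Finite.exists_maximalFor
    (fun x => ∑ α ∈ R.simples, R.coeff x α) O hfin hne
  refine ⟨δ, hδO.1, hδO.2, ?_⟩
  intro α hα
  by_contra hlt
  push_neg at hlt
  have hαr := R.simples_sub hα
  obtain ⟨k, hk⟩ := R.crystal α hαr δ hδO.1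
  have hαα := R.inner_self_pos' hαr
  have hkneg : (k : ℝ) < 0 := by
    rw [← hk]
    apply div_neg_of_neg_of_pos (by linarith) hαα
  have hk1 : k ≤ -1 := by have : k < 0 := by exact_mod_cast hkneg
                          omega
  set δ' := δ - (2 * ⟪δ, α⟫_ℝ / ⟪α, α⟫_ℝ) • α with hδ'
  have hδ'r : δ' ∈ R.roots := R.reflClosed α hαr δ hδO.1
  have hδ'O : δ' ∈ O := ⟨hδ'r, by rw [hδ', refl_inner_self hαα.ne']; exact hδO.2⟩
  have hRHS : ∑ x ∈ R.simples, ((R.coeff δ x : ℝ) - if x = α then (k : ℝ) else 0) • x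
      = δ' := by
    simp only [sub_smul, Finset.sum_sub_distrib, ite_smul, zero_smul,
      Finset.sum_ite_eq', if_pos hα]
    rw [← R.coeff_spec' hδO.1, hδ', hk]
  have hco := R.coeff_unique (f := fun x => (R.coeff δ' x : ℝ))
      (g := fun x => (R.coeff δ x : ℝ) - if x = α then (k : ℝ) else 0)
      (by rw [← R.coeff_spec' hδ'r, hRHS])
  have hht : ∀ x ∈ R.simples, R.coeff δ' x = R.coeff δ x - if x = α then k else 0 := by
    intro x hx
    have := hco x hx
    by_cases hxa : x = α <;> simp only [hxa, if_true, if_false] at this ⊢ <;> exact_mod_cast this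
  have hsum : ∑ x ∈ R.simples, R.coeff δ' x = (∑ x ∈ R.simples, R.coeff δ x) - k := by
    rw [Finset.sum_congr rfl hht, Finset.sum_sub_distrib, Finset.sum_ite_eq', if_pos hα]
  have hmx := hmax hδ'O (by beta_reduce; omega)
  beta_reduce at hmx
  omega

end RootSystemData

/-- Theorem 4.1(ii): if `θ` is fundamental then `α_θ` is long,
`[θ:α_θ] = 2`, and the sum of `[θ:β]` over the simple roots `β` adjacent to `α_θ`
equals `3`. -/
theorem stmt9 {V : Type} [NormedAddCommGroup V] [InnerProductSpace ℝ V] [FiniteDimensional ℝ V]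
    (R : RootSystemData V) (θ αθ : V) (hθ : R.IsHighest θ)
    (hfund : R.IsFundamental θ αθ) :
    R.IsLong αθ ∧ R.coeff θ αθ = 2 ∧
      ∀ S : Finset V,
        (↑S : Set V) = {β : V | β ∈ R.simples ∧ β ≠ αθ ∧ ⟪β, αθ⟫_ℝ ≠ 0} →
        ∑ β ∈ S, R.coeff θ β = 3 := by
  classical
  obtain ⟨hθpos, hθhigh⟩ := hθ
  obtain ⟨hθr, hθc⟩ := hθpos
  obtain ⟨hαs, hθα0, huniq, hratio⟩ := hfund
  have hαr : αθ ∈ R.roots := R.simples_sub hαs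
  have hαα := R.inner_self_pos' hαr
  have hθθ := R.inner_self_pos' hθr
  have hθαval : 2 * ⟪θ, αθ⟫_ℝ = ⟪αθ, αθ⟫_ℝ := by
    have := (div_eq_iff hαα.ne').mp hratio; linarith
  -- θ is dominant
  have hdomθ : ∀ β ∈ R.simples, 0 ≤ ⟪θ, β⟫_ℝ := by
    intro β hβ
    by_cases hb : β = αθ
    · subst hb; linarith
    · rcases eq_or_ne ⟪θ, β⟫_ℝ 0 with h | h
      · rw [h]
      · exact absurd (huniq β hβ h) hb
  -- θ is a longest root
  have hlong : ∀ γ ∈ R.roots, ⟪γ, γ⟫_ℝ ≤ ⟪θ, θ⟫_ℝ := by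
    intro γ hγ
    obtain ⟨δ, hδr, hδn, hδdom⟩ := R.exists_dominant hγ
    obtain ⟨c, hc⟩ := hθhigh δ hδr
    have hc' : θ - δ = ∑ α ∈ R.simples, ((c α : ℝ)) • α := by
      rw [hc]
      refine Finset.sum_congr rfl fun α _ => ?_
      rw [← Int.cast_smul_eq_zsmul ℝ]
      norm_num
    have h1 : 0 ≤ ⟪θ - δ, θ⟫_ℝ := by
      rw [hc', sum_inner]
      apply Finset.sum_nonneg
      intro α hα
      rw [real_inner_smul_left, real_inner_comm]
      exact mul_nonneg (by positivity) (hdomθ α hα)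
    have h2 : 0 ≤ ⟪θ - δ, δ⟫_ℝ := by
      rw [hc', sum_inner]
      apply Finset.sum_nonneg
      intro α hα
      rw [real_inner_smul_left, real_inner_comm]
      exact mul_nonneg (by positivity) (hδdom α hα)
    rw [inner_sub_left] at h1 h2
    have hcm : ⟪δ, θ⟫_ℝ = ⟪θ, δ⟫_ℝ := real_inner_comm θ δ
    linarith [hδn]
  -- expansion of inner products with θ
  have hexp : ∀ y : V, ⟪θ, y⟫_ℝ = ∑ α ∈ R.simples, (R.coeff θ α : ℝ) * ⟪α, y⟫_ℝ := by
    intro y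
    conv_lhs => rw [R.coeff_spec' hθr]
    rw [sum_inner]
    exact Finset.sum_congr rfl fun α _ => real_inner_smul_left α y _
  have hvanish : ∀ α ∈ R.simples, α ≠ αθ → ⟪α, θ⟫_ℝ = 0 := by
    intro α hα hne
    rw [real_inner_comm]
    by_contra h
    exact hne (huniq α hα h)
  have hθθeq : ⟪θ, θ⟫_ℝ = (R.coeff θ αθ : ℝ) * ⟪αθ, θ⟫_ℝ := by
    rw [hexp θ]
    apply Finset.sum_eq_single_of_mem αθ hαs
    intro α hα hne
    rw [hvanish α hα hne, mul_zero]
  obtain ⟨k, hkdef⟩ := R.crystal θ hθr αθ hαr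
  have hk' : 2 * ⟪αθ, θ⟫_ℝ = k * ⟪θ, θ⟫_ℝ := (div_eq_iff hθθ.ne').mp hkdef
  have hcmθα : ⟪αθ, θ⟫_ℝ = ⟪θ, αθ⟫_ℝ := real_inner_comm θ αθ
  have hkval : (k : ℝ) * ⟪θ, θ⟫_ℝ = ⟪αθ, αθ⟫_ℝ := by linarith
  have hkpos : (0 : ℝ) < k := by nlinarith
  have hkle : (k : ℝ) ≤ 1 := by nlinarith [hlong αθ hαr]
  have hk1 : k = 1 := by
    have h1 : 0 < k := by exact_mod_cast hkpos
    have h2 : k ≤ 1 := by exact_mod_cast hkle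
    omega
  have hnorm : ⟪θ, θ⟫_ℝ = ⟪αθ, αθ⟫_ℝ := by
    rw [hk1] at hkval; push_cast at hkval; linarith
  have hc2 : R.coeff θ αθ = 2 := by
    have : (R.coeff θ αθ : ℝ) = 2 := by
      have h := hθθeq
      rw [hnorm, hcmθα] at h
      have hhalf : ⟪θ, αθ⟫_ℝ = ⟪αθ, αθ⟫_ℝ / 2 := by linarith
      rw [hhalf] at h
      field_simp at h
      nlinarith [hαα]
    exact_mod_cast this
  refine ⟨⟨hαr, ?_⟩, hc2, ?_⟩
  · intro γ' hγ'
    have h := hlong γ' hγ'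
    rw [hnorm, real_inner_self_eq_norm_mul_norm, real_inner_self_eq_norm_mul_norm] at h
    nlinarith [norm_nonneg γ', norm_nonneg αθ]
  · intro S hS
    have hSmem : ∀ β : V, β ∈ S ↔ (β ∈ R.simples ∧ β ≠ αθ ∧ ⟪β, αθ⟫_ℝ ≠ 0) := by
      intro β
      constructor
      · intro h
        have : β ∈ (↑S : Set V) := h
        rwa [hS] at this
      · intro h
        have : β ∈ (↑S : Set V) := by rw [hS]; exact h
        exact_mod_cast this
    have hSsub : S ⊆ R.simples := fun β hβ => ((hSmem β).mp hβ).1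
    have hαnS : αθ ∉ S := fun h => ((hSmem αθ).mp h).2.1 rfl
    -- for each adjacent simple root, the inner product with αθ is -⟪αθ,αθ⟫/2
    have hkey : ∀ β ∈ S, ⟪β, αθ⟫_ℝ = -(⟪αθ, αθ⟫_ℝ / 2) := by
      intro β hβ
      obtain ⟨hβs, hβne, hβin⟩ := (hSmem β).mp hβ
      have hβr : β ∈ R.roots := R.simples_sub hβs
      have hββ := R.inner_self_pos' hβr
      have hneg : ⟪β, αθ⟫_ℝ < 0 :=
        lt_of_le_of_ne (R.simples_inner_nonpos hβs hαs hβne) hβin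
      obtain ⟨n, hn⟩ := R.crystal αθ hαr β hβr
      obtain ⟨m, hm⟩ := R.crystal β hβr αθ hαr
      have hn' : 2 * ⟪β, αθ⟫_ℝ = n * ⟪αθ, αθ⟫_ℝ := (div_eq_iff hαα.ne').mp hn
      have hm' : 2 * ⟪αθ, β⟫_ℝ = m * ⟪β, β⟫_ℝ := (div_eq_iff hββ.ne').mp hm
      have hcomm : ⟪αθ, β⟫_ℝ = ⟪β, αθ⟫_ℝ := real_inner_comm β αθ
      have hnneg : (n : ℝ) < 0 := by nlinarith
      have hmneg : (m : ℝ) < 0 := by nlinarith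
      have hn1 : n ≤ -1 := by have : n < 0 := by exact_mod_cast hnneg
                              omega
      have hm1 : m ≤ -1 := by have : m < 0 := by exact_mod_cast hmneg
                              omega
      have hβle : ⟪β, β⟫_ℝ ≤ ⟪αθ, αθ⟫_ℝ := hnorm ▸ hlong β hβr
      have hmn : (m : ℝ) ≤ n := by nlinarith
      have hmn' : m ≤ n := by exact_mod_cast hmn
      have hcs := real_inner_mul_inner_self_le β αθ
      have h4 : ((n : ℝ) * ⟪αθ, αθ⟫_ℝ) * ((m : ℝ) * ⟪β, β⟫_ℝ)
          = 4 * (⟪β, αθ⟫_ℝ * ⟪β, αθ⟫_ℝ) := by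
        rw [← hn', ← hm', hcomm]; ring
      have hprod : ((n * m : ℤ) : ℝ) ≤ 4 := by
        push_cast
        nlinarith [mul_pos hαα hββ]
      have hprod' : n * m ≤ 4 := by exact_mod_cast hprod
      have hn4 : -4 ≤ m := by nlinarith
      have key : n = -1 ∨ (n = -2 ∧ m = -2) := by
        interval_cases m <;> omega
      rcases key with h | ⟨h1, h2⟩
      · rw [h] at hn'; push_cast at hn'; linarith
      · exfalso
        rw [h1] at hn'; rw [h2] at hm'
        push_cast at hn' hm'
        have hz : ⟪β + αθ, β + αθ⟫_ℝ = 0 := by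
          simp only [inner_add_left, inner_add_right]
          linarith
        have hz' : ‖β + αθ‖ * ‖β + αθ‖ = 0 := by
          rw [← real_inner_self_eq_norm_mul_norm, hz]
        have : β + αθ = 0 := by simpa [mul_self_eq_zero] using hz'
        exact R.add_ne_zero_of_simples hβs hαs hβne this
    -- sum over simples splits
    have hsplit : ⟪θ, αθ⟫_ℝ
        = ∑ α ∈ insert αθ S, (R.coeff θ α : ℝ) * ⟪α, αθ⟫_ℝ := by
      rw [hexp αθ]
      refine (Finset.sum_subset ?_ ?_).symm
      · intro x hx
        rcases Finset.mem_insert.mp hx with h | h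
        · rw [h]; exact hαs
        · exact hSsub h
      · intro x hxs hxn
        have hxa : x ≠ αθ := fun h => hxn (by rw [h]; exact Finset.mem_insert_self _ _)
        have hxS : x ∉ S := fun h => hxn (Finset.mem_insert_of_mem h)
        have : ⟪x, αθ⟫_ℝ = 0 := by
          by_contra h
          exact hxS ((hSmem x).mpr ⟨hxs, hxa, h⟩)
        rw [this, mul_zero]
    rw [Finset.sum_insert hαnS] at hsplit
    have hSsum : ∑ β ∈ S, (R.coeff θ β : ℝ) * ⟪β, αθ⟫_ℝ
        = (∑ β ∈ S, (R.coeff θ β : ℝ)) * (-(⟪αθ, αθ⟫_ℝ / 2)) := by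
      rw [Finset.sum_mul]
      exact Finset.sum_congr rfl fun β hβ => by rw [hkey β hβ]
    rw [hSsum, hc2] at hsplit
    push_cast at hsplit
    have h3 : (∑ β ∈ S, (R.coeff θ β : ℝ)) * ⟪αθ, αθ⟫_ℝ = 3 * ⟪αθ, αθ⟫_ℝ := by
      linarith
    have hN : (∑ β ∈ S, (R.coeff θ β : ℝ)) = 3 := mul_right_cancel₀ hαα.ne' h3
    exact_mod_cast hN
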